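/- arXiv:1403.1530 — 3 statements merged into one kernel-verified Lean document; each statement's English description precedes it below -/
import Mathlib

section
/- Let N ≥ 2, α ∈ (0,1), c > 0, and G(x,y) = c|x-y|^{-(N-2α)}. Then there exists a constant C > 0 such that for every Borel set E ⊂ ℝ^N and every y ∈ ℝ^N, ∫_E G(x,y) dω(x) ≤ C (∫_E dω)^{(p*-1)/p*}, where dω(x) = dx/(1+|x|^{N+2α}) and p* = N/(N-2α). -/
open MeasureTheory Metric
open scoped ENNReal

lemma calc1 (c s : ℝ) (N : ℕ) (ρ : ℝ) (hρ : 0 < ρ) :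
    c / (ρ / 2) ^ s * ρ ^ N = c * 2 ^ s * ρ ^ ((N : ℝ) - s) := by
  have h1 : (ρ / 2) ^ s = ρ ^ s / (2:ℝ) ^ s := Real.div_rpow hρ.le (by norm_num : (0:ℝ) ≤ 2) s
  have h2 : ρ ^ ((N:ℝ) - s) = ρ ^ (N:ℕ) / ρ ^ s := by
    rw [Real.rpow_sub hρ, Real.rpow_natCast]
  have h3 : (ρ:ℝ) ^ s ≠ 0 := (Real.rpow_pos_of_pos hρ s).ne'
  have h4 : (2:ℝ) ^ s ≠ 0 := (Real.rpow_pos_of_pos two_pos s).ne'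
  rw [h1, h2]
  field_simp

lemma calc2 (s r : ℝ) (hr : 0 < r) (N k : ℕ) :
    (r / 2 ^ k) ^ ((N:ℝ) - s) = r ^ ((N:ℝ) - s) * ((2:ℝ) ^ (s - (N:ℝ))) ^ k := by
  set w : ℝ := (N:ℝ) - s with hw
  have h1 : (r / 2 ^ k) ^ w = r ^ w / ((2:ℝ) ^ k) ^ w :=
    Real.div_rpow hr.le (by positivity) w
  have h2 : ((2:ℝ) ^ (k:ℕ)) ^ w = ((2:ℝ) ^ w) ^ (k:ℕ) := by
    rw [← Real.rpow_natCast 2 k, ← Real.rpow_mul (by norm_num), mul_comm,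
      Real.rpow_mul (by norm_num), Real.rpow_natCast]
  have h3 : (2:ℝ) ^ (s - (N:ℝ)) = ((2:ℝ) ^ w)⁻¹ := by
    rw [← Real.rpow_neg (by norm_num), hw, neg_sub]
  rw [h1, h2, h3, div_eq_mul_inv, inv_pow]

lemma green_cover (N : ℕ) (y : EuclideanSpace ℝ (Fin N)) (r : ℝ) (hr : 0 < r) :
    ball y r ⊆ {y} ∪ ⋃ k : ℕ, (ball y (r / 2 ^ k) \ ball y (r / 2 ^ (k + 1))) := by
  classical
  intro x hx
  by_cases hxy : x = y
  · exact Or.inl (by simp [hxy])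
  right
  have hd0 : 0 < dist x y := dist_pos.mpr hxy
  have hdr : dist x y < r := mem_ball.mp hx
  have hP : ∃ k : ℕ, r / 2 ^ (k + 1) ≤ dist x y := by
    obtain ⟨n, hn⟩ := exists_pow_lt_of_lt_one (div_pos hd0 hr) (by norm_num : (2⁻¹ : ℝ) < 1)
    refine ⟨n, ?_⟩
    have h2 : ((2:ℝ)⁻¹) ^ n = 1 / 2 ^ n := by
      rw [inv_pow, one_div]
    rw [h2, div_lt_div_iff₀ (by positivity) hr] at hn
    have hstep : r / 2 ^ (n + 1) ≤ r / 2 ^ n := by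
      apply div_le_div_of_nonneg_left hr.le (by positivity)
      apply pow_le_pow_right₀ (by norm_num) (Nat.le_succ n)
    calc r / 2 ^ (n + 1) ≤ r / 2 ^ n := hstep
      _ ≤ dist x y := by
        rw [div_le_iff₀ (by positivity)]
        nlinarith [hn]
  let k := Nat.find hP
  have hk1 : r / 2 ^ (k + 1) ≤ dist x y := Nat.find_spec hP
  have hk2 : dist x y < r / 2 ^ k := by
    rcases Nat.eq_zero_or_pos k with h0 | hpos
    · simpa [h0] using hdr
    · have := Nat.find_min hP (m := k - 1) (by omega)
      push_neg at this
      have hke : k - 1 + 1 = k := Nat.succ_pred_eq_of_pos hpos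
      rwa [hke] at this
  exact Set.mem_iUnion.mpr ⟨k, mem_ball.mpr hk2, fun h => absurd (mem_ball.mp h) (not_lt.mpr hk1)⟩

lemma green_ball_bound (N : ℕ) (hN1 : 1 ≤ N) (c s : ℝ) (hc : 0 ≤ c) (hs0 : 0 ≤ s)
    (hsN : s < N) :
    ∃ K : ℝ≥0∞, K ≠ ⊤ ∧ ∀ (y : EuclideanSpace ℝ (Fin N)) (r : ℝ), 0 < r →
      (∫⁻ x in ball y r, ENNReal.ofReal (c / ‖x - y‖ ^ s)
        ∂(volume : Measure (EuclideanSpace ℝ (Fin N))))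
        ≤ K * ENNReal.ofReal (r ^ ((N : ℝ) - s)) := by
  classical
  haveI : Nontrivial (EuclideanSpace ℝ (Fin N)) := by
    apply Module.nontrivial_of_finrank_pos (R := ℝ)
    rw [finrank_euclideanSpace_fin]
    omega
  set v : ℝ≥0∞ := (volume : Measure (EuclideanSpace ℝ (Fin N)))
      (ball (0 : EuclideanSpace ℝ (Fin N)) 1) with hv
  have hvfin : v ≠ ⊤ := measure_ball_lt_top.ne
  set q : ℝ := (2 : ℝ) ^ (s - (N : ℝ)) with hqdef
  have hq0 : 0 < q := Real.rpow_pos_of_pos (by norm_num) _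
  have hq1 : q < 1 := Real.rpow_lt_one_of_one_lt_of_neg (by norm_num) (by linarith)
  have hqe : ENNReal.ofReal q < 1 := by
    rw [← ENNReal.ofReal_one]
    exact (ENNReal.ofReal_lt_ofReal_iff_of_nonneg hq0.le).mpr hq1
  refine ⟨ENNReal.ofReal (c * 2 ^ s) * v * (1 - ENNReal.ofReal q)⁻¹, ?_, ?_⟩
  · apply ENNReal.mul_ne_top (ENNReal.mul_ne_top ENNReal.ofReal_ne_top hvfin)
    rw [ENNReal.inv_ne_top, Ne, tsub_eq_zero_iff_le]
    exact fun h => absurd (lt_of_lt_of_le hqe h) (lt_irrefl _)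
  intro y r hr
  set w : ℝ := (N:ℝ) - s with hwdef
  set A : ℕ → Set (EuclideanSpace ℝ (Fin N)) :=
    fun k => ball y (r / 2 ^ k) \ ball y (r / 2 ^ (k + 1)) with hA
  have hterm : ∀ k : ℕ, (∫⁻ x in A k, ENNReal.ofReal (c / ‖x - y‖ ^ s))
      ≤ (ENNReal.ofReal (c * 2 ^ s) * v) * ENNReal.ofReal q ^ k * ENNReal.ofReal (r ^ w) := by
    intro k
    set ρ : ℝ := r / 2 ^ k with hρdef
    have hρ : 0 < ρ := by positivity
    have hmeas : MeasurableSet (A k) := measurableSet_ball.diff measurableSet_ball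
    have hbound : ∀ x ∈ A k, ENNReal.ofReal (c / ‖x - y‖ ^ s)
        ≤ ENNReal.ofReal (c / (ρ / 2) ^ s) := by
      intro x hx
      have hlow : ρ / 2 ≤ ‖x - y‖ := by
        have hh := hx.2
        rw [mem_ball, not_lt] at hh
        have h2 : r / 2 ^ (k + 1) = ρ / 2 := by
          rw [hρdef, div_div, pow_succ]
        rw [h2] at hh
        rwa [← dist_eq_norm]
      apply ENNReal.ofReal_le_ofReal
      have h1 : (0:ℝ) < (ρ/2) ^ s := Real.rpow_pos_of_pos (by positivity) s
      have h2 : (ρ/2) ^ s ≤ ‖x - y‖ ^ s := Real.rpow_le_rpow (by positivity) hlow hs0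
      exact div_le_div_of_nonneg_left hc h1 h2
    calc (∫⁻ x in A k, ENNReal.ofReal (c / ‖x - y‖ ^ s))
        ≤ ∫⁻ _x in A k, ENNReal.ofReal (c / (ρ / 2) ^ s) := setLIntegral_mono' hmeas hbound
      _ = ENNReal.ofReal (c / (ρ / 2) ^ s) * volume (A k) := setLIntegral_const _ _
      _ ≤ ENNReal.ofReal (c / (ρ / 2) ^ s) * (ENNReal.ofReal (ρ ^ N) * v) := by
          gcongr
          calc volume (A k) ≤ volume (ball y ρ) := measure_mono Set.diff_subset
            _ = ENNReal.ofReal (ρ ^ N) * v := by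
                rw [Measure.addHaar_ball volume y hρ.le, finrank_euclideanSpace_fin]
      _ = ENNReal.ofReal (c / (ρ / 2) ^ s * ρ ^ N) * v := by
          rw [ENNReal.ofReal_mul (by positivity), mul_assoc]
      _ = ENNReal.ofReal (c * 2 ^ s * (r ^ w * q ^ k)) * v := by
          rw [calc1 c s N ρ hρ, hρdef, calc2 s r hr N k]
      _ = (ENNReal.ofReal (c * 2 ^ s) * v) * ENNReal.ofReal q ^ k * ENNReal.ofReal (r ^ w) := by
          rw [ENNReal.ofReal_mul (by positivity), ENNReal.ofReal_mul
            (by positivity : (0:ℝ) ≤ r ^ w), ← ENNReal.ofReal_pow hq0.le]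
          ring
  calc (∫⁻ x in ball y r, ENNReal.ofReal (c / ‖x - y‖ ^ s))
      ≤ ∫⁻ x in {y} ∪ ⋃ k, A k, ENNReal.ofReal (c / ‖x - y‖ ^ s) :=
        lintegral_mono_set (green_cover N y r hr)
    _ ≤ (∫⁻ x in {y}, ENNReal.ofReal (c / ‖x - y‖ ^ s))
        + ∫⁻ x in ⋃ k, A k, ENNReal.ofReal (c / ‖x - y‖ ^ s) := lintegral_union_le _ _ _
    _ = ∫⁻ x in ⋃ k, A k, ENNReal.ofReal (c / ‖x - y‖ ^ s) := by
        rw [setLIntegral_measure_zero _ _ (measure_singleton y), zero_add]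
    _ ≤ ∑' k, ∫⁻ x in A k, ENNReal.ofReal (c / ‖x - y‖ ^ s) := lintegral_iUnion_le _ _
    _ ≤ ∑' k, (ENNReal.ofReal (c * 2 ^ s) * v) * ENNReal.ofReal q ^ k * ENNReal.ofReal (r ^ w) :=
        ENNReal.tsum_le_tsum hterm
    _ = (ENNReal.ofReal (c * 2 ^ s) * v * (1 - ENNReal.ofReal q)⁻¹) * ENNReal.ofReal (r ^ w) := by
        rw [ENNReal.tsum_mul_right, ENNReal.tsum_mul_left, ENNReal.tsum_geometric]

theorem green_marcinkiewicz_pointwise (N : ℕ) (hN : 2 ≤ N) (α c : ℝ)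
    (hα : α ∈ Set.Ioo (0:ℝ) 1) (hc : 0 < c) :
    ∃ C > 0, ∀ E : Set (EuclideanSpace ℝ (Fin N)), MeasurableSet E →
      ∀ y : EuclideanSpace ℝ (Fin N),
      (∫⁻ x in E, ENNReal.ofReal (c / ‖x - y‖ ^ ((N:ℝ) - 2*α))
          ∂((volume : Measure (EuclideanSpace ℝ (Fin N))).withDensity
            (fun x => ENNReal.ofReal ((1 + ‖x‖ ^ ((N:ℝ) + 2*α))⁻¹))))
        ≤ ENNReal.ofReal C *
          (((volume : Measure (EuclideanSpace ℝ (Fin N))).withDensity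
            (fun x => ENNReal.ofReal ((1 + ‖x‖ ^ ((N:ℝ) + 2*α))⁻¹))) E)
            ^ (((N:ℝ) / ((N:ℝ) - 2*α) - 1) / ((N:ℝ) / ((N:ℝ) - 2*α))) := by
  obtain ⟨hα0, hα1⟩ := hα
  have hN2 : (2:ℝ) ≤ (N:ℝ) := by exact_mod_cast hN
  set s : ℝ := (N:ℝ) - 2*α with hsdef
  have hs0 : 0 ≤ s := by simp only [hsdef]; linarith
  have hsN : s < (N:ℝ) := by simp only [hsdef]; linarith
  have hd : (0:ℝ) < (N:ℝ) - 2*α := by linarith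
  have hNpos : (0:ℝ) < (N:ℝ) := by linarith
  set e : ℝ := ((N:ℝ) / ((N:ℝ) - 2*α) - 1) / ((N:ℝ) / ((N:ℝ) - 2*α)) with hedef
  have he : e = 2*α / (N:ℝ) := by
    rw [hedef]
    field_simp
    ring
  have he' : 0 < e := by rw [he]; positivity
  obtain ⟨K, hKfin, hK⟩ := green_ball_bound N (by omega) c s hc.le hs0 hsN
  have hKc : K + ENNReal.ofReal c ≠ ⊤ := ENNReal.add_ne_top.mpr ⟨hKfin, ENNReal.ofReal_ne_top⟩
  refine ⟨(K + ENNReal.ofReal c).toReal + 1, by positivity, ?_⟩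
  intro E hE y
  set ρ : EuclideanSpace ℝ (Fin N) → ℝ≥0∞ :=
    fun x => ENNReal.ofReal ((1 + ‖x‖ ^ ((N:ℝ) + 2*α))⁻¹) with hρdef
  have hρmeas : Measurable ρ := by fun_prop
  have hρle1 : ∀ x, ρ x ≤ 1 := by
    intro x
    rw [hρdef]
    apply ENNReal.ofReal_le_one.mpr
    have h1 : (0:ℝ) ≤ ‖x‖ ^ ((N:ℝ) + 2*α) := Real.rpow_nonneg (norm_nonneg x) _
    rw [inv_le_one_iff₀]
    right
    linarith
  set g : EuclideanSpace ℝ (Fin N) → ℝ≥0∞ :=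
    fun x => ENNReal.ofReal (c / ‖x - y‖ ^ s) with hgdef
  have hgmeas : Measurable g := by
    rw [hgdef]; fun_prop
  set ω : Measure (EuclideanSpace ℝ (Fin N)) := volume.withDensity ρ with hω
  set t : ℝ≥0∞ := ω E with ht
  have hCge : K + ENNReal.ofReal c ≤ ENNReal.ofReal ((K + ENNReal.ofReal c).toReal + 1) := by
    conv_lhs => rw [← ENNReal.ofReal_toReal hKc]
    exact ENNReal.ofReal_le_ofReal (by linarith [ENNReal.toReal_nonneg (a := K + ENNReal.ofReal c)])
  rcases eq_or_ne t 0 with ht0 | ht0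
  · rw [show ω.restrict E = 0 from Measure.restrict_eq_zero.mpr ht0, lintegral_zero_measure]
    exact zero_le
  rcases eq_or_ne t ⊤ with htT | htT
  · rw [htT, ENNReal.top_rpow_of_pos he', ENNReal.mul_top
      (ENNReal.ofReal_pos.mpr (by positivity)).ne']
    exact le_top
  -- main case
  have htR : 0 < t.toReal := ENNReal.toReal_pos ht0 htT
  set r : ℝ := t.toReal ^ ((N:ℝ))⁻¹ with hrdef
  have hr : 0 < r := Real.rpow_pos_of_pos htR _
  have hofreal_t : ENNReal.ofReal t.toReal = t := ENNReal.ofReal_toReal htT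
  have hconv : ∀ u : ℝ, ENNReal.ofReal (r ^ u) = t ^ ((N:ℝ)⁻¹ * u) := by
    intro u
    rw [hrdef, ← Real.rpow_mul htR.le, ← ENNReal.ofReal_rpow_of_pos htR, hofreal_t]
  have hconv1 : ENNReal.ofReal (r ^ ((N:ℝ) - s)) = t ^ e := by
    rw [hconv, he]
    congr 1
    rw [hsdef]
    field_simp
    ring
  have hconv2 : ENNReal.ofReal (r ^ (-s)) * t = t ^ e := by
    rw [hconv]
    have h := ENNReal.rpow_add ((N:ℝ)⁻¹ * -s) 1 ht0 htT
    rw [ENNReal.rpow_one] at h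
    rw [← h, he]
    congr 1
    rw [hsdef]
    field_simp
    ring
  have hsplit : (∫⁻ x in E, g x ∂ω) ≤ (∫⁻ x in E ∩ ball y r, g x ∂ω)
      + ∫⁻ x in E \ ball y r, g x ∂ω := by
    calc (∫⁻ x in E, g x ∂ω) = ∫⁻ x in (E ∩ ball y r) ∪ (E \ ball y r), g x ∂ω := by
          rw [Set.inter_union_diff]
      _ ≤ _ := lintegral_union_le _ _ _
  have htermA : (∫⁻ x in E ∩ ball y r, g x ∂ω) ≤ K * t ^ e := by
    calc (∫⁻ x in E ∩ ball y r, g x ∂ω) ≤ ∫⁻ x in ball y r, g x ∂ω :=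
          lintegral_mono_set Set.inter_subset_right
      _ = ∫⁻ x in ball y r, ρ x * g x ∂volume := by
          rw [hω, restrict_withDensity measurableSet_ball,
            lintegral_withDensity_eq_lintegral_mul _ hρmeas hgmeas]
          rfl
      _ ≤ ∫⁻ x in ball y r, g x ∂volume := by
          apply lintegral_mono
          intro x
          calc ρ x * g x ≤ 1 * g x := mul_le_mul_left (hρle1 x) _
            _ = g x := one_mul _
      _ ≤ K * ENNReal.ofReal (r ^ ((N:ℝ) - s)) := hK y r hr
      _ = K * t ^ e := by rw [hconv1]
  have htermB : (∫⁻ x in E \ ball y r, g x ∂ω) ≤ ENNReal.ofReal c * t ^ e := by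
    have hbound : ∀ x ∈ E \ ball y r, g x ≤ ENNReal.ofReal (c * r ^ (-s)) := by
      intro x hx
      have hge : r ≤ ‖x - y‖ := by
        have := hx.2
        rw [mem_ball, not_lt, ← dist_eq_norm] at *
        exact this
      rw [hgdef]
      apply ENNReal.ofReal_le_ofReal
      rw [Real.rpow_neg hr.le, ← div_eq_mul_inv]
      have h1 : (0:ℝ) < r ^ s := Real.rpow_pos_of_pos hr s
      have h2 : r ^ s ≤ ‖x - y‖ ^ s := Real.rpow_le_rpow hr.le hge hs0
      exact div_le_div_of_nonneg_left hc.le h1 h2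
    calc (∫⁻ x in E \ ball y r, g x ∂ω)
        ≤ ∫⁻ _x in E \ ball y r, ENNReal.ofReal (c * r ^ (-s)) ∂ω :=
          setLIntegral_mono' (hE.diff measurableSet_ball) hbound
      _ = ENNReal.ofReal (c * r ^ (-s)) * ω (E \ ball y r) := setLIntegral_const _ _
      _ ≤ ENNReal.ofReal (c * r ^ (-s)) * t := by
          gcongr
          exact measure_mono Set.diff_subset
      _ = ENNReal.ofReal c * (ENNReal.ofReal (r ^ (-s)) * t) := by
          rw [ENNReal.ofReal_mul hc.le, mul_assoc]
      _ = ENNReal.ofReal c * t ^ e := by rw [hconv2]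
  calc (∫⁻ x in E, g x ∂ω) ≤ (∫⁻ x in E ∩ ball y r, g x ∂ω)
        + ∫⁻ x in E \ ball y r, g x ∂ω := hsplit
    _ ≤ K * t ^ e + ENNReal.ofReal c * t ^ e := add_le_add htermA htermB
    _ = (K + ENNReal.ofReal c) * t ^ e := (add_mul _ _ _).symm
    _ ≤ ENNReal.ofReal ((K + ENNReal.ofReal c).toReal + 1) * t ^ e :=
        mul_le_mul_left hCge _
end

section
/- Let N ≥ 2, α ∈ (0,1), dω(x) = dx/(1+|x|^{N+2α}), p* = N/(N-2α). For a finite positive Borel measure ν on ℝ^N define 𝔾[ν](x) = ∫ c|x-y|^{-(N-2α)} dν(y) with c > 0 fixed. Then there exists C > 0 (independent of ν) such that for every Borel set E ⊂ ℝ^N, ∫_E 𝔾[ν] dω ≤ C ν(ℝ^N) (∫_E dω)^{(p*-1)/p*}. In particular 𝔾[ν] belongs to the Marcinkiewicz (weak L^{p*}) space with respect to ω, with quasi-norm at most C ν(ℝ^N). -/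
open MeasureTheory Metric
open scoped ENNReal NNReal Real

lemma dyadic_id (c β n r : ℝ) (hr : 0 < r) (k : ℕ) :
    c / (r * (2:ℝ) ^ (-((k:ℝ)+1))) ^ β * (r * (2:ℝ) ^ (-(k:ℝ))) ^ n =
      c * 2 ^ β * r ^ (n - β) * (2:ℝ) ^ ((β - n) * k) := by
  have h2 : (0:ℝ) < 2 := two_pos
  have hA : (r * (2:ℝ) ^ (-((k:ℝ)+1))) ^ β = r ^ β * (2:ℝ) ^ (-((k:ℝ)+1) * β) := by
    rw [Real.mul_rpow hr.le (Real.rpow_nonneg h2.le _), ← Real.rpow_mul h2.le]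
  have hB : (r * (2:ℝ) ^ (-(k:ℝ))) ^ n = r ^ n * (2:ℝ) ^ (-(k:ℝ) * n) := by
    rw [Real.mul_rpow hr.le (Real.rpow_nonneg h2.le _), ← Real.rpow_mul h2.le]
  rw [hA, hB, Real.rpow_sub hr]
  have h1 : (0:ℝ) < r ^ β := Real.rpow_pos_of_pos hr β
  have h3 : (0:ℝ) < (2:ℝ) ^ (-((k:ℝ)+1) * β) := Real.rpow_pos_of_pos h2 _
  calc c / (r ^ β * (2:ℝ) ^ (-((k:ℝ)+1) * β)) * (r ^ n * (2:ℝ) ^ (-(k:ℝ) * n))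
      = (c * (r ^ n / r ^ β)) * ((2:ℝ) ^ (-(k:ℝ) * n) / (2:ℝ) ^ (-((k:ℝ)+1) * β)) := by
        field_simp
    _ = (c * (r ^ n / r ^ β)) * (2:ℝ) ^ (-(k:ℝ) * n - -((k:ℝ)+1) * β) := by
        rw [← Real.rpow_sub h2]
    _ = (c * (r ^ n / r ^ β)) * (2:ℝ) ^ (β + (β - n) * k) := by
        congr 1; ring_nf
    _ = c * 2 ^ β * (r ^ n / r ^ β) * (2:ℝ) ^ ((β - n) * k) := by
        rw [Real.rpow_add h2]; ring

lemma ball_bound (N : ℕ) (hN : 1 ≤ N) (c β : ℝ) (hc : 0 ≤ c) (hβ0 : 0 < β) (hβN : β < N) :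
    ∃ D : ℝ≥0∞, D ≠ ⊤ ∧ ∀ (y : EuclideanSpace ℝ (Fin N)) (r : ℝ), 0 < r →
      ∫⁻ x in ball y r, ENNReal.ofReal (c / ‖x - y‖ ^ β) ∂volume
        ≤ D * ENNReal.ofReal (r ^ ((N:ℝ) - β)) := by
  haveI : Nontrivial (EuclideanSpace ℝ (Fin N)) :=
    Module.nontrivial_of_finrank_pos (R := ℝ) (by rw [finrank_euclideanSpace_fin]; omega)
  have h2 : (0:ℝ) < 2 := two_pos
  set V : ℝ≥0∞ := volume (ball (0 : EuclideanSpace ℝ (Fin N)) 1) with hV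
  have hVne : V ≠ ⊤ := measure_ball_lt_top.ne
  set q : ℝ≥0∞ := ENNReal.ofReal ((2:ℝ) ^ (β - (N:ℝ))) with hqdef
  have hq1 : q < 1 := by
    rw [hqdef, ← ENNReal.ofReal_one]
    exact ENNReal.ofReal_lt_ofReal_iff_of_nonneg (Real.rpow_nonneg h2.le _) |>.mpr
      (Real.rpow_lt_one_of_one_lt_of_neg one_lt_two (by linarith))
  refine ⟨ENNReal.ofReal (c * 2 ^ β) * V * (∑' k : ℕ, q ^ k), ?_, ?_⟩
  · rw [ENNReal.tsum_geometric]
    refine ENNReal.mul_ne_top (ENNReal.mul_ne_top ENNReal.ofReal_ne_top hVne) ?_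
    rw [ENNReal.inv_ne_top]
    simp [tsub_eq_zero_iff_le, not_le, hq1]
  · intro y r hr
    set s : ℕ → ℝ := fun k => r * (2:ℝ) ^ (-(k:ℝ)) with hs
    have hspos : ∀ k, 0 < s k := fun k => by
      exact mul_pos hr (Real.rpow_pos_of_pos h2 _)
    set A : ℕ → Set (EuclideanSpace ℝ (Fin N)) :=
      fun k => (ball y (s (k+1)))ᶜ ∩ ball y (s k) with hA
    -- conversion natpow ↔ rpow
    have hconv : ∀ m : ℕ, (2:ℝ) ^ (-(m:ℝ)) = ((2:ℝ)⁻¹) ^ m := by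
      intro m
      rw [Real.rpow_neg h2.le, Real.rpow_natCast, ← inv_pow]
    -- coverage
    have hsub : ball y r ⊆ {y} ∪ ⋃ k, A k := by
      intro x hx
      rcases eq_or_ne x y with hxy | hxy
      · exact Or.inl (by simp [hxy])
      · right
        have hd0 : 0 < dist x y := dist_pos.2 hxy
        have hdr : dist x y < r := mem_ball.mp hx
        have hP : ∃ k : ℕ, s (k+1) ≤ dist x y := by
          obtain ⟨n, hn⟩ := exists_pow_lt_of_lt_one (div_pos hd0 hr)
            (by norm_num : (2:ℝ)⁻¹ < 1)
          refine ⟨n, ?_⟩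
          have : s (n+1) ≤ r * (2⁻¹:ℝ) ^ n := by
            rw [hs]; simp only
            rw [hconv (n+1)]
            refine mul_le_mul_of_nonneg_left ?_ hr.le
            rw [pow_succ]
            nlinarith [pow_pos (by norm_num : (0:ℝ) < 2⁻¹) n]
          exact this.trans ((le_div_iff₀' hr).mp hn.le)
        classical
        set k₀ := Nat.find hP with hk₀
        refine Set.mem_iUnion.2 ⟨k₀, ?_, ?_⟩
        · simp only [Set.mem_compl_iff, mem_ball, not_lt]
          exact Nat.find_spec hP
        · rw [mem_ball]
          rcases Nat.eq_zero_or_pos k₀ with h0 | hpos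
          · rw [h0]
            simpa [hs] using hdr
          · obtain ⟨j, hj⟩ := Nat.exists_eq_add_of_lt hpos
            have := Nat.find_min hP (m := j) (by omega)
            push_neg at this
            rw [hk₀] at hj ⊢
            rw [hj]
            simpa using this
    -- main calc
    have hmeasA : ∀ k, MeasurableSet (A k) :=
      fun k => (measurableSet_ball.compl).inter measurableSet_ball
    calc ∫⁻ x in ball y r, ENNReal.ofReal (c / ‖x - y‖ ^ β) ∂volume
        ≤ ∫⁻ x in {y} ∪ ⋃ k, A k, ENNReal.ofReal (c / ‖x - y‖ ^ β) ∂volume :=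
          lintegral_mono_set hsub
      _ ≤ (∫⁻ x in {y}, ENNReal.ofReal (c / ‖x - y‖ ^ β) ∂volume)
            + ∫⁻ x in ⋃ k, A k, ENNReal.ofReal (c / ‖x - y‖ ^ β) ∂volume :=
          lintegral_union_le _ _ _
      _ = ∫⁻ x in ⋃ k, A k, ENNReal.ofReal (c / ‖x - y‖ ^ β) ∂volume := by
          rw [setLIntegral_measure_zero _ _ (measure_singleton y), zero_add]
      _ ≤ ∑' k, ∫⁻ x in A k, ENNReal.ofReal (c / ‖x - y‖ ^ β) ∂volume :=
          lintegral_iUnion_le _ _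
      _ ≤ ∑' k, ENNReal.ofReal (c / (s (k+1)) ^ β) * volume (A k) := by
          refine ENNReal.tsum_le_tsum fun k => ?_
          rw [← setLIntegral_const]
          refine setLIntegral_mono' (hmeasA k) fun x hx => ?_
          refine ENNReal.ofReal_le_ofReal ?_
          have hxd : s (k+1) ≤ ‖x - y‖ := by
            have := hx.1
            simp only [Set.mem_compl_iff, mem_ball, not_lt, dist_eq_norm] at this
            exact this
          exact div_le_div_of_nonneg_left hc
            (Real.rpow_pos_of_pos (hspos (k+1)) β)
            (Real.rpow_le_rpow (hspos (k+1)).le hxd hβ0.le)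
      _ ≤ ∑' k, ENNReal.ofReal (c / (s (k+1)) ^ β) * (ENNReal.ofReal (s k ^ N) * V) := by
          refine ENNReal.tsum_le_tsum fun k => ?_
          refine mul_le_mul_right ?_ _
          calc volume (A k) ≤ volume (ball y (s k)) := measure_mono Set.inter_subset_right
            _ = ENNReal.ofReal (s k ^ Module.finrank ℝ (EuclideanSpace ℝ (Fin N))) * V :=
              Measure.addHaar_ball _ _ (hspos k).le
            _ = ENNReal.ofReal (s k ^ N) * V := by rw [finrank_euclideanSpace_fin]
      _ = ∑' k, (ENNReal.ofReal (c * 2 ^ β * r ^ ((N:ℝ) - β)) * q ^ k) * V := by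
          congr 1; funext k
          rw [← mul_assoc, ← ENNReal.ofReal_mul (by positivity)]
          congr 2
          rw [hqdef, ← ENNReal.ofReal_pow (Real.rpow_nonneg h2.le _),
            ← ENNReal.ofReal_mul (by positivity)]
          congr 1
          rw [← Real.rpow_natCast (s k) N]
          simp only [hs]
          rw [show ((2:ℝ) ^ (β - (N:ℝ))) ^ k = (2:ℝ) ^ ((β - (N:ℝ)) * k) by
            rw [← Real.rpow_natCast ((2:ℝ) ^ (β - (N:ℝ))) k, ← Real.rpow_mul h2.le]]
          push_cast
          exact dyadic_id c β N r hr k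
      _ = ENNReal.ofReal (c * 2 ^ β) * V * (∑' k : ℕ, q ^ k)
            * ENNReal.ofReal (r ^ ((N:ℝ) - β)) := by
          rw [ENNReal.tsum_mul_right, ENNReal.tsum_mul_left,
            ENNReal.ofReal_mul (by positivity)]
          ring

set_option maxHeartbeats 1000000 in
theorem green_potential_marcinkiewicz (N : ℕ) (hN : 2 ≤ N) (α c : ℝ)
    (hα : α ∈ Set.Ioo (0:ℝ) 1) (hc : 0 < c) :
    ∃ C > 0, ∀ ν : Measure (EuclideanSpace ℝ (Fin N)), IsFiniteMeasure ν →
      ∀ E : Set (EuclideanSpace ℝ (Fin N)), MeasurableSet E →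
      (∫⁻ x in E, (∫⁻ y, ENNReal.ofReal (c / ‖x - y‖ ^ ((N:ℝ) - 2*α)) ∂ν)
          ∂((volume : Measure (EuclideanSpace ℝ (Fin N))).withDensity
            (fun x => ENNReal.ofReal ((1 + ‖x‖ ^ ((N:ℝ) + 2*α))⁻¹))))
        ≤ ENNReal.ofReal C * ν Set.univ *
          (((volume : Measure (EuclideanSpace ℝ (Fin N))).withDensity
            (fun x => ENNReal.ofReal ((1 + ‖x‖ ^ ((N:ℝ) + 2*α))⁻¹))) E)
            ^ (((N:ℝ) / ((N:ℝ) - 2*α) - 1) / ((N:ℝ) / ((N:ℝ) - 2*α))) := by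
  obtain ⟨hα0, hα1⟩ := hα
  have hNR : (2:ℝ) ≤ (N:ℝ) := by exact_mod_cast hN
  have hN0 : (0:ℝ) < (N:ℝ) := by linarith
  set Ω : EuclideanSpace ℝ (Fin N) → ℝ≥0∞ :=
    fun x => ENNReal.ofReal ((1 + ‖x‖ ^ ((N:ℝ) + 2*α))⁻¹) with hΩ
  set ω := (volume : Measure (EuclideanSpace ℝ (Fin N))).withDensity Ω with hω
  set β : ℝ := (N:ℝ) - 2*α with hβ
  have hβ0 : 0 < β := by rw [hβ]; linarith
  have hβN : β < (N:ℝ) := by rw [hβ]; linarith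
  have hexp : ((N:ℝ) / β - 1) / ((N:ℝ) / β) = 2*α/(N:ℝ) := by
    rw [hβ]; field_simp; rw [mul_sub, mul_one, mul_div_assoc', mul_div_cancel_left₀ _ (by linarith : (N:ℝ) - 2*α ≠ 0)]; ring
  have he0 : 0 < 2*α/(N:ℝ) := by positivity
  obtain ⟨D, hD, hball⟩ := ball_bound N (by omega) c β hc.le hβ0 hβN
  -- measurability facts
  have hΩmeas : Measurable Ω := by
    have h1 : Measurable fun x : EuclideanSpace ℝ (Fin N) => ‖x‖ ^ ((N:ℝ) + 2*α) :=
      (Real.continuous_rpow_const (by positivity)).measurable.comp measurable_norm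
    exact ((measurable_const.add h1).inv).ennreal_ofReal
  have hΩle : ∀ x, Ω x ≤ 1 := by
    intro x
    rw [hΩ]
    refine ENNReal.ofReal_le_one.mpr ?_
    have h1 : (1:ℝ) ≤ 1 + ‖x‖ ^ ((N:ℝ) + 2*α) :=
      le_add_of_nonneg_right (Real.rpow_nonneg (norm_nonneg x) _)
    exact inv_le_one_of_one_le₀ h1
  have hker : Measurable (fun p : (EuclideanSpace ℝ (Fin N)) × (EuclideanSpace ℝ (Fin N)) =>
      ENNReal.ofReal (c / ‖p.1 - p.2‖ ^ β)) := by
    have h1 : Measurable fun p : (EuclideanSpace ℝ (Fin N)) × (EuclideanSpace ℝ (Fin N)) =>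
        ‖p.1 - p.2‖ := (measurable_fst.sub measurable_snd).norm
    have h2 : Measurable fun s : ℝ => c / s ^ β :=
      measurable_const.div (Real.continuous_rpow_const hβ0.le).measurable
    exact (h2.comp h1).ennreal_ofReal
  have hsec : ∀ y, Measurable fun x : EuclideanSpace ℝ (Fin N) =>
      ENNReal.ofReal (c / ‖x - y‖ ^ β) := by
    intro y
    have h1 : Measurable fun x : EuclideanSpace ℝ (Fin N) => ‖x - y‖ :=
      (measurable_id.sub measurable_const).norm
    have h2 : Measurable fun s : ℝ => c / s ^ β :=
      measurable_const.div (Real.continuous_rpow_const hβ0.le).measurable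
    exact (h2.comp h1).ennreal_ofReal
  haveI : SigmaFinite ω := by
    rw [hω, hΩ]; exact SigmaFinite.withDensity_ofReal _
  refine ⟨D.toReal + c, lt_add_of_nonneg_of_lt ENNReal.toReal_nonneg hc, ?_⟩
  intro ν hν E hE
  haveI := hν
  rw [hexp]
  by_cases h0 : ω E = 0
  · rw [setLIntegral_measure_zero _ _ h0]; exact zero_le
  by_cases htop : ω E = ⊤
  · rcases eq_or_ne (ν Set.univ) 0 with hν0 | hν0
    · have hzero : ν = 0 := Measure.measure_univ_eq_zero.mp hν0
      simp [hzero]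
    · rw [htop, ENNReal.top_rpow_of_pos he0, ENNReal.mul_top
        (mul_ne_zero (ENNReal.ofReal_pos.mpr
          (lt_add_of_nonneg_of_lt ENNReal.toReal_nonneg hc)).ne' hν0)]
      exact le_top
  -- main case
  have ht : 0 < (ω E).toReal := ENNReal.toReal_pos h0 htop
  set t : ℝ := (ω E).toReal with htdef
  set r : ℝ := t ^ ((N:ℝ)⁻¹) with hrdef
  have hr : 0 < r := Real.rpow_pos_of_pos ht _
  have hωE : ω E = ENNReal.ofReal t := (ENNReal.ofReal_toReal htop).symm
  have hωe : (ω E) ^ (2*α/(N:ℝ)) = ENNReal.ofReal (t ^ (2*α/(N:ℝ))) := by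
    rw [hωE, ENNReal.ofReal_rpow_of_nonneg ht.le he0.le]
  have hrω1 : ENNReal.ofReal (r ^ ((N:ℝ) - β)) = (ω E) ^ (2*α/(N:ℝ)) := by
    rw [hωe, hrdef, ← Real.rpow_mul ht.le]
    congr 1
    rw [hβ]
    congr 1
    field_simp; ring
  have hrω2 : ENNReal.ofReal (c / r ^ β) * ω E = ENNReal.ofReal c * (ω E) ^ (2*α/(N:ℝ)) := by
    rw [hωe, hωE, ← ENNReal.ofReal_mul (by positivity), ← ENNReal.ofReal_mul hc.le]
    congr 1
    rw [hrdef, ← Real.rpow_mul ht.le]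
    have hh : t ^ (2*α/(N:ℝ)) = t ^ (1:ℝ) / t ^ ((N:ℝ)⁻¹ * β) := by
      rw [← Real.rpow_sub ht]
      congr 1
      rw [hβ]
      field_simp; ring
    have hx : (0:ℝ) < t ^ ((N:ℝ)⁻¹ * β) := Real.rpow_pos_of_pos ht _
    rw [hh, Real.rpow_one]
    field_simp
  have hkey : ∀ y, (∫⁻ x in E, ENNReal.ofReal (c / ‖x - y‖ ^ β) ∂ω)
      ≤ (D + ENNReal.ofReal c) * (ω E) ^ (2*α/(N:ℝ)) := by
    intro y
    rw [← lintegral_inter_add_diff (B := ball y r) _ E measurableSet_ball]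
    have hT1 : (∫⁻ x in E ∩ ball y r, ENNReal.ofReal (c / ‖x - y‖ ^ β) ∂ω)
        ≤ D * (ω E) ^ (2*α/(N:ℝ)) := by
      rw [← hrω1]
      refine le_trans (lintegral_mono_set Set.inter_subset_right) ?_
      refine le_trans ?_ (hball y r hr)
      rw [hω, restrict_withDensity measurableSet_ball,
        lintegral_withDensity_eq_lintegral_mul _ hΩmeas (hsec y)]
      refine lintegral_mono fun x => ?_
      calc (Ω * fun x => ENNReal.ofReal (c / ‖x - y‖ ^ β)) x
          = Ω x * ENNReal.ofReal (c / ‖x - y‖ ^ β) := rfl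
        _ ≤ 1 * ENNReal.ofReal (c / ‖x - y‖ ^ β) := mul_le_mul_left (hΩle x) _
        _ = ENNReal.ofReal (c / ‖x - y‖ ^ β) := one_mul _
    have hT2 : (∫⁻ x in E \ ball y r, ENNReal.ofReal (c / ‖x - y‖ ^ β) ∂ω)
        ≤ ENNReal.ofReal c * (ω E) ^ (2*α/(N:ℝ)) := by
      rw [← hrω2]
      calc (∫⁻ x in E \ ball y r, ENNReal.ofReal (c / ‖x - y‖ ^ β) ∂ω)
          ≤ ∫⁻ _x in E \ ball y r, ENNReal.ofReal (c / r ^ β) ∂ω := by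
            refine setLIntegral_mono' (hE.diff measurableSet_ball) fun x hx => ?_
            refine ENNReal.ofReal_le_ofReal ?_
            have hxr : r ≤ ‖x - y‖ := by
              have := hx.2
              simp only [mem_ball, dist_eq_norm, not_lt] at this
              exact this
            exact div_le_div_of_nonneg_left hc.le (Real.rpow_pos_of_pos hr β)
              (Real.rpow_le_rpow hr.le hxr hβ0.le)
        _ = ENNReal.ofReal (c / r ^ β) * ω (E \ ball y r) := setLIntegral_const _ _
        _ ≤ ENNReal.ofReal (c / r ^ β) * ω E :=
            mul_le_mul_right (measure_mono Set.diff_subset) _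
    calc _ ≤ D * (ω E) ^ (2*α/(N:ℝ)) + ENNReal.ofReal c * (ω E) ^ (2*α/(N:ℝ)) :=
          add_le_add hT1 hT2
      _ = (D + ENNReal.ofReal c) * (ω E) ^ (2*α/(N:ℝ)) := by ring
  have hswap : (∫⁻ x in E, (∫⁻ y, ENNReal.ofReal (c / ‖x - y‖ ^ β) ∂ν) ∂ω)
      = ∫⁻ y, (∫⁻ x in E, ENNReal.ofReal (c / ‖x - y‖ ^ β) ∂ω) ∂ν :=
    lintegral_lintegral_swap (hker.aemeasurable)
  calc (∫⁻ x in E, (∫⁻ y, ENNReal.ofReal (c / ‖x - y‖ ^ β) ∂ν) ∂ω)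
      = ∫⁻ y, (∫⁻ x in E, ENNReal.ofReal (c / ‖x - y‖ ^ β) ∂ω) ∂ν := hswap
    _ ≤ ∫⁻ _y, (D + ENNReal.ofReal c) * (ω E) ^ (2*α/(N:ℝ)) ∂ν :=
        lintegral_mono fun y => hkey y
    _ = (D + ENNReal.ofReal c) * (ω E) ^ (2*α/(N:ℝ)) * ν Set.univ := lintegral_const _
    _ = ENNReal.ofReal (D.toReal + c) * ν Set.univ * (ω E) ^ (2*α/(N:ℝ)) := by
        rw [ENNReal.ofReal_add ENNReal.toReal_nonneg hc.le, ENNReal.ofReal_toReal hD]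
        ring
end

section
/- Let N ≥ 2, α ∈ (0,1), τ < -N, and for x with |x| ≥ 4 let e = x/|x|, D₁ = B_{1/2}(-e) \ B_{1/|x|}(-e), and I(y) = |e+y|^τ + |e-y|^τ - 2. Then there exist R ≥ 4 and c > 1 such that for |x| ≥ R, c^{-1}|x|^{-N-τ} ≤ ∫_{D₁} I(y)/|y|^{N+2α} dy ≤ c |x|^{-N-τ}. -/
open MeasureTheory Metric Set

lemma annulus_rpow_integral (N : ℕ) (hN : 2 ≤ N) (τ : ℝ) (hτ : τ < -(N:ℝ))
    (ε : ℝ) (hε : 0 < ε) (hε2 : ε < 1/2) :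
    ∫ z in Metric.ball (0 : EuclideanSpace ℝ (Fin N)) (1/2) \ Metric.ball 0 ε, ‖z‖ ^ τ =
      ((N : ℝ) * (volume (Metric.ball (0 : EuclideanSpace ℝ (Fin N)) 1)).toReal) *
        (((1/2:ℝ) ^ ((N:ℝ) + τ) - ε ^ ((N:ℝ) + τ)) / ((N:ℝ) + τ)) := by
  haveI : Nonempty (Fin N) := ⟨⟨0, by omega⟩⟩
  haveI : Nontrivial (EuclideanSpace ℝ (Fin N)) := by
    infer_instance
  have hd : Module.finrank ℝ (EuclideanSpace ℝ (Fin N)) = N := finrank_euclideanSpace_fin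
  set f : ℝ → ℝ := (Set.Ico ε (1/2)).indicator (fun r => r ^ τ) with hf
  have key := integral_fun_norm_addHaar (volume : Measure (EuclideanSpace ℝ (Fin N))) f
  rw [hd] at key
  have hset : (fun z : EuclideanSpace ℝ (Fin N) => ‖z‖) ⁻¹' (Set.Ico ε (1/2)) =
      Metric.ball (0 : EuclideanSpace ℝ (Fin N)) (1/2) \ Metric.ball 0 ε := by
    ext z
    simp [mem_ball_zero_iff, Set.mem_Ico, not_lt, and_comm]
  have hLHS : (∫ z : EuclideanSpace ℝ (Fin N), f ‖z‖) =
      ∫ z in Metric.ball (0 : EuclideanSpace ℝ (Fin N)) (1/2) \ Metric.ball 0 ε, ‖z‖ ^ τ := by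
    have : (fun z : EuclideanSpace ℝ (Fin N) => f ‖z‖) =
        (Metric.ball (0 : EuclideanSpace ℝ (Fin N)) (1/2) \ Metric.ball 0 ε).indicator
          (fun z => ‖z‖ ^ τ) := by
      rw [← hset]
      funext z
      exact Set.indicator_comp_right (M := ℝ) (fun z : EuclideanSpace ℝ (Fin N) => ‖z‖)
        (s := Set.Ico ε (1/2)) (g := fun r => r ^ τ) (x := z)
    rw [this, integral_indicator ((isOpen_ball.measurableSet).diff isOpen_ball.measurableSet)]
  have hRHS : (∫ y in Set.Ioi (0:ℝ), y ^ (N - 1) • f y) =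
      ∫ y in Set.Ico ε (1/2), y ^ ((N:ℝ) - 1 + τ) := by
    have h1 : (fun y : ℝ => y ^ (N - 1) • f y) =
        (Set.Ico ε (1/2)).indicator (fun y => y ^ (N - 1) * y ^ τ) := by
      funext y
      simp only [hf, Set.indicator, smul_eq_mul]
      split_ifs <;> simp
    rw [h1, integral_indicator measurableSet_Ico, Measure.restrict_restrict measurableSet_Ico]
    have hinter : Set.Ico ε (1/2) ∩ Set.Ioi (0:ℝ) = Set.Ico ε (1/2) :=
      Set.inter_eq_self_of_subset_left (fun y hy => lt_of_lt_of_le hε hy.1)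
    rw [hinter]
    refine setIntegral_congr_fun measurableSet_Ico (fun y hy => ?_)
    have hy0 : 0 < y := lt_of_lt_of_le hε hy.1
    rw [← Real.rpow_natCast y (N - 1), ← Real.rpow_add hy0]
    congr 1
    have : ((N - 1 : ℕ) : ℝ) = (N:ℝ) - 1 := by
      have : (1:ℕ) ≤ N := by omega
      push_cast [Nat.cast_sub this]
      ring
    rw [this]
  have hIco : (∫ y in Set.Ico ε (1/2), y ^ ((N:ℝ) - 1 + τ)) =
      ((1/2:ℝ) ^ ((N:ℝ) + τ) - ε ^ ((N:ℝ) + τ)) / ((N:ℝ) + τ) := by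
    rw [MeasureTheory.integral_Ico_eq_integral_Ioo, ← MeasureTheory.integral_Ioc_eq_integral_Ioo,
      ← intervalIntegral.integral_of_le hε2.le]
    rw [integral_rpow]
    · have h2 : (N:ℝ) - 1 + τ + 1 = (N:ℝ) + τ := by ring
      rw [h2]
    · right
      constructor
      · intro h; linarith
      · rw [Set.uIcc_of_le hε2.le]
        intro h
        exact absurd h.1 (by linarith)
  rw [← hLHS, key, hRHS, hIco, nsmul_eq_mul, smul_eq_mul, measureReal_def]
  ring

theorem annulus_integral_estimate (N : ℕ) (hN : 2 ≤ N) (α τ : ℝ)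
    (hα : α ∈ Set.Ioo (0:ℝ) 1) (hτ : τ < -(N:ℝ)) :
    ∃ R : ℝ, 4 ≤ R ∧ ∃ c > 1, ∀ x : EuclideanSpace ℝ (Fin N), R ≤ ‖x‖ →
      c⁻¹ * ‖x‖ ^ (-(N:ℝ) - τ) ≤
        (∫ y in Metric.ball (-(‖x‖⁻¹ • x)) (1/2) \ Metric.ball (-(‖x‖⁻¹ • x)) ‖x‖⁻¹,
          (‖(‖x‖⁻¹ • x) + y‖ ^ τ + ‖(‖x‖⁻¹ • x) - y‖ ^ τ - 2) / ‖y‖ ^ ((N:ℝ) + 2*α)) ∧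
      (∫ y in Metric.ball (-(‖x‖⁻¹ • x)) (1/2) \ Metric.ball (-(‖x‖⁻¹ • x)) ‖x‖⁻¹,
          (‖(‖x‖⁻¹ • x) + y‖ ^ τ + ‖(‖x‖⁻¹ • x) - y‖ ^ τ - 2) / ‖y‖ ^ ((N:ℝ) + 2*α))
        ≤ c * ‖x‖ ^ (-(N:ℝ) - τ) := by
  set E := EuclideanSpace ℝ (Fin N)
  set s : ℝ := -(N:ℝ) - τ with hs_def
  have hs : 0 < s := by simp only [hs_def]; linarith
  have hτ0 : τ < 0 := by have : (0:ℝ) ≤ N := Nat.cast_nonneg N; linarith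
  set p : ℝ := (N:ℝ) + 2*α with hp_def
  have hp : 0 < p := by
    have : (0:ℝ) < N := by exact_mod_cast (by omega : 0 < N)
    have := hα.1; simp only [hp_def]; linarith
  set V : ℝ := (volume (Metric.ball (0 : E) 1)).toReal with hV_def
  have hV : 0 < V := by
    apply ENNReal.toReal_pos
    · exact (measure_ball_pos volume (0:E) one_pos).ne'
    · exact measure_ball_lt_top.ne
  set C : ℝ := (N:ℝ) * V with hC_def
  have hC : 0 < C := by
    have : (0:ℝ) < N := by exact_mod_cast (by omega : 0 < N)
    exact mul_pos this hV
  set a : ℝ := (2 * (3/2:ℝ) ^ p)⁻¹ with ha_def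
  set b : ℝ := ((1/2:ℝ) ^ p)⁻¹ with hb_def
  have ha : 0 < a := by apply inv_pos.2; positivity
  have hb : 0 < b := by apply inv_pos.2; positivity
  set K₁ : ℝ := a * C / (2 * s) with hK₁_def
  set K₂ : ℝ := b * C / s with hK₂_def
  have hK₁ : 0 < K₁ := by apply div_pos (mul_pos ha hC); linarith
  have hK₂ : 0 < K₂ := div_pos (mul_pos hb hC) hs
  refine ⟨max 4 (2 * 2 ^ (1/s)), le_max_left _ _, max (max K₂ K₁⁻¹) 2,
    lt_of_lt_of_le one_lt_two (le_max_right _ _), ?_⟩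
  set c : ℝ := max (max K₂ K₁⁻¹) 2 with hc_def
  have hc1 : 1 < c := lt_of_lt_of_le one_lt_two (le_max_right _ _)
  have hc0 : 0 < c := lt_trans one_pos hc1
  intro x hx
  have hx4 : 4 ≤ ‖x‖ := le_trans (le_max_left _ _) hx
  have hx0 : 0 < ‖x‖ := by linarith
  have hxinv : 0 < ‖x‖⁻¹ := inv_pos.2 hx0
  have hxinv2 : ‖x‖⁻¹ < 1/2 := by
    rw [inv_lt_comm₀ hx0 (by norm_num)]
    norm_num
    linarith
  set e : E := ‖x‖⁻¹ • x with he_def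
  have he : ‖e‖ = 1 := by
    rw [he_def, norm_smul, norm_inv, norm_norm, inv_mul_cancel₀ hx0.ne']
  set A : Set E := Metric.ball (-e) (1/2) \ Metric.ball (-e) ‖x‖⁻¹ with hA_def
  have hA_meas : MeasurableSet A :=
    isOpen_ball.measurableSet.diff isOpen_ball.measurableSet
  have hμA : volume A ≠ ⊤ :=
    ((measure_mono Set.diff_subset).trans_lt measure_ball_lt_top).ne
  -- membership facts
  have hmem : ∀ y ∈ A, ‖x‖⁻¹ ≤ ‖e + y‖ ∧ ‖e + y‖ < 1/2 ∧
      1/2 < ‖y‖ ∧ ‖y‖ < 3/2 ∧ 3/2 < ‖e - y‖ := by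
    intro y hy
    obtain ⟨hy1, hy2⟩ := hy
    rw [Metric.mem_ball, dist_eq_norm, sub_neg_eq_add] at hy1
    rw [Metric.mem_ball, dist_eq_norm, sub_neg_eq_add, not_lt] at hy2
    rw [add_comm] at hy1 hy2
    refine ⟨hy2, hy1, ?_, ?_, ?_⟩
    · have h3 : ‖e‖ ≤ ‖e + y‖ + ‖y‖ := by
        calc ‖e‖ = ‖(e + y) - y‖ := by rw [add_sub_cancel_right]
          _ ≤ ‖e + y‖ + ‖y‖ := norm_sub_le _ _
      rw [he] at h3; linarith
    · have h3 : ‖y‖ ≤ ‖e + y‖ + ‖e‖ := by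
        calc ‖y‖ = ‖(e + y) - e‖ := by rw [add_sub_cancel_left]
          _ ≤ ‖e + y‖ + ‖e‖ := norm_sub_le _ _
      rw [he] at h3; linarith
    · have h4 : (2:ℝ) • e = (e - y) + (e + y) := by
        rw [two_smul]; abel
      have h3 : 2 * ‖e‖ ≤ ‖e - y‖ + ‖e + y‖ := by
        calc 2 * ‖e‖ = ‖(2:ℝ) • e‖ := by
              rw [show ‖(2:ℝ) • e‖ = ‖(2:ℝ)‖ * ‖e‖ from norm_smul 2 e, Real.norm_eq_abs]
              norm_num
          _ = ‖(e - y) + (e + y)‖ := by rw [h4]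
          _ ≤ ‖e - y‖ + ‖e + y‖ := norm_add_le _ _
      rw [he] at h3; linarith
  set g : E → ℝ := fun y => ‖e + y‖ ^ τ with hg_def
  set f : E → ℝ := fun y => (‖e + y‖ ^ τ + ‖e - y‖ ^ τ - 2) / ‖y‖ ^ p with hf_def
  -- pointwise bounds
  have hbound : ∀ y ∈ A, a * g y ≤ f y ∧ f y ≤ b * g y := by
    intro y hy
    obtain ⟨h1, h2, hy_lb, hy_ub, hey_lb⟩ := hmem y hy
    have ht0 : 0 < ‖e + y‖ := lt_of_lt_of_le hxinv h1
    set t : ℝ := ‖e + y‖ ^ τ with ht_def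
    have htpos : 0 < t := Real.rpow_pos_of_pos ht0 τ
    have ht4 : 4 ≤ t := by
      have h14 : (1/2:ℝ) ^ τ ≤ t := Real.rpow_le_rpow_of_nonpos ht0 h2.le hτ0.le
      have h24 : (4:ℝ) ≤ (1/2:ℝ) ^ τ := by
        have h2e : (1/2:ℝ) ^ τ = 2 ^ (-τ) := by
          rw [one_div, Real.inv_rpow (by norm_num : (0:ℝ) ≤ 2), ← Real.rpow_neg (by norm_num)]
        rw [h2e]
        calc (4:ℝ) = 2 ^ (2:ℝ) := by
              rw [show (2:ℝ) = ((2:ℕ):ℝ) by norm_num, Real.rpow_natCast]; norm_num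
          _ ≤ 2 ^ (-τ) := by
              apply (Real.rpow_le_rpow_left_iff (by norm_num : (1:ℝ) < 2)).2
              have : (2:ℝ) ≤ N := by exact_mod_cast hN
              linarith
      linarith
    have hey_pos : 0 < ‖e - y‖ := by linarith
    have hey_rpow : ‖e - y‖ ^ τ ≤ 1 :=
      Real.rpow_le_one_of_one_le_of_nonpos (by linarith) hτ0.le
    have hey_rpow_pos : 0 < ‖e - y‖ ^ τ := Real.rpow_pos_of_pos hey_pos τ
    have hden_lb : (1/2:ℝ) ^ p ≤ ‖y‖ ^ p :=
      Real.rpow_le_rpow (by norm_num) hy_lb.le hp.le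
    have hden_ub : ‖y‖ ^ p ≤ (3/2:ℝ) ^ p :=
      Real.rpow_le_rpow (by positivity) hy_ub.le hp.le
    have hden_pos : 0 < ‖y‖ ^ p := Real.rpow_pos_of_pos (by linarith) p
    have hD1 : (0:ℝ) < (1/2:ℝ) ^ p := by positivity
    have hnum_lb : t / 2 ≤ t + ‖e - y‖ ^ τ - 2 := by linarith
    have hnum_ub : t + ‖e - y‖ ^ τ - 2 ≤ t := by linarith
    have hnum_nonneg : 0 ≤ t + ‖e - y‖ ^ τ - 2 := by linarith
    constructor
    · have hstep : (t / 2) / ((3/2:ℝ) ^ p) ≤ (t + ‖e - y‖ ^ τ - 2) / ‖y‖ ^ p := by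
        apply div_le_div₀ hnum_nonneg hnum_lb hden_pos hden_ub
      calc a * g y = (t / 2) / ((3/2:ℝ) ^ p) := by
            rw [ha_def]; field_simp; rfl
        _ ≤ f y := hstep
    · have hstep : (t + ‖e - y‖ ^ τ - 2) / ‖y‖ ^ p ≤ t / ((1/2:ℝ) ^ p) := by
        apply div_le_div₀ htpos.le hnum_ub hD1 hden_lb
      calc f y ≤ t / ((1/2:ℝ) ^ p) := hstep
        _ = b * g y := by rw [hb_def]; field_simp; rfl
  -- strong measurability on A via continuity
  have hg_cont : ContinuousOn g A := by
    apply ContinuousOn.rpow_const ((continuous_const.add continuous_id).norm.continuousOn)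
    intro y hy
    exact Or.inl (ne_of_gt (lt_of_lt_of_le hxinv (hmem y hy).1))
  have hf_cont : ContinuousOn f A := by
    apply ContinuousOn.div
    · apply ContinuousOn.sub _ continuousOn_const
      apply ContinuousOn.add hg_cont
      apply ContinuousOn.rpow_const ((continuous_const.sub continuous_id).norm.continuousOn)
      intro y hy
      have := (hmem y hy).2.2.2.2
      exact Or.inl (by positivity)
    · apply ContinuousOn.rpow_const (continuous_norm.continuousOn)
      intro y hy
      exact Or.inr hp.le
    · intro y hy
      have := (hmem y hy).2.2.1
      exact (Real.rpow_pos_of_pos (by linarith) p).ne'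
  -- integrability
  have hg_bdd : ∀ y ∈ A, g y ≤ (‖x‖⁻¹) ^ τ := by
    intro y hy
    exact Real.rpow_le_rpow_of_nonpos hxinv (hmem y hy).1 hτ0.le
  have hg_nonneg : ∀ y, 0 ≤ g y := fun y => Real.rpow_nonneg (norm_nonneg _) τ
  have hg_int : IntegrableOn g A := by
    refine ⟨hg_cont.aestronglyMeasurable hA_meas, ?_⟩
    apply HasFiniteIntegral.restrict_of_bounded (C := (‖x‖⁻¹) ^ τ) hμA.lt_top
    filter_upwards [ae_restrict_mem hA_meas] with y hy
    rw [Real.norm_eq_abs, abs_of_nonneg (hg_nonneg y)]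
    exact hg_bdd y hy
  have hf_int : IntegrableOn f A := by
    refine ⟨hf_cont.aestronglyMeasurable hA_meas, ?_⟩
    apply HasFiniteIntegral.restrict_of_bounded (C := b * (‖x‖⁻¹) ^ τ) hμA.lt_top
    filter_upwards [ae_restrict_mem hA_meas] with y hy
    have h1 := (hbound y hy).1
    have h2 := (hbound y hy).2
    have h0 : 0 ≤ f y := le_trans (by positivity) h1
    rw [Real.norm_eq_abs, abs_of_nonneg h0]
    calc f y ≤ b * g y := h2
      _ ≤ b * (‖x‖⁻¹) ^ τ := mul_le_mul_of_nonneg_left (hg_bdd y hy) hb.le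
  -- value of ∫ g over A
  have hG : ∫ y in A, g y = C * ((‖x‖ ^ s - 2 ^ s) / s) := by
    have hpre : A = (fun y : E => e + y) ⁻¹' (Metric.ball (0:E) (1/2) \ Metric.ball 0 ‖x‖⁻¹) := by
      ext y
      simp only [hA_def, Set.mem_diff, Set.mem_preimage, Metric.mem_ball, dist_eq_norm,
        sub_neg_eq_add, mem_ball_zero_iff, sub_zero, add_comm]
      rw [dist_eq_norm (E := E) y (-e), sub_neg_eq_add, add_comm y e]
      simp only [dist_zero_right]
    have htrans : ∫ y in A, g y
        = ∫ z in Metric.ball (0:E) (1/2) \ Metric.ball 0 ‖x‖⁻¹, ‖z‖ ^ τ := by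
      rw [hpre]
      exact (measurePreserving_add_left volume e).setIntegral_preimage_emb
        (MeasurableEquiv.addLeft e).measurableEmbedding (fun z => ‖z‖ ^ τ) _
    rw [htrans, annulus_rpow_integral N hN τ hτ ‖x‖⁻¹ hxinv hxinv2]
    have hNτ : (N:ℝ) + τ = -s := by rw [hs_def]; ring
    have h1 : (1/2:ℝ) ^ ((N:ℝ) + τ) = 2 ^ s := by
      rw [hNτ, one_div, Real.inv_rpow (by norm_num), Real.rpow_neg (by norm_num), inv_inv]
    have h2 : (‖x‖⁻¹) ^ ((N:ℝ) + τ) = ‖x‖ ^ s := by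
      rw [hNτ, Real.inv_rpow hx0.le, Real.rpow_neg hx0.le, inv_inv]
    rw [h1, h2, hNτ, div_neg, ← neg_div, neg_sub]
  -- bounds on the value
  have hxs_pos : 0 < ‖x‖ ^ s := Real.rpow_pos_of_pos hx0 s
  have h2s_pos : (0:ℝ) < 2 ^ s := Real.rpow_pos_of_pos (by norm_num) s
  have hR2 : 2 * 2 ^ s ≤ ‖x‖ ^ s := by
    have hxR : 2 * 2 ^ (1/s) ≤ ‖x‖ := le_trans (le_max_right _ _) hx
    have h0 : (0:ℝ) ≤ 2 * 2 ^ (1/s) := by positivity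
    have hA2 : ((2:ℝ) ^ (1/s)) ^ s = 2 := by
      rw [← Real.rpow_mul (by norm_num : (0:ℝ) ≤ 2), one_div,
        inv_mul_cancel₀ hs.ne', Real.rpow_one]
    calc 2 * 2 ^ s = 2 ^ s * ((2:ℝ) ^ (1/s)) ^ s := by rw [hA2]; ring
      _ = (2 * 2 ^ (1/s)) ^ s := (Real.mul_rpow (by norm_num) (by positivity)).symm
      _ ≤ ‖x‖ ^ s := Real.rpow_le_rpow h0 hxR hs.le
  have hGlow : C * (‖x‖ ^ s / (2 * s)) ≤ ∫ y in A, g y := by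
    rw [hG]
    apply mul_le_mul_of_nonneg_left _ hC.le
    rw [← div_div]
    gcongr
    linarith
  have hGhigh : ∫ y in A, g y ≤ C * (‖x‖ ^ s / s) := by
    rw [hG]
    apply mul_le_mul_of_nonneg_left _ hC.le
    gcongr
    linarith
  -- compare integrals
  have hlow : a * ∫ y in A, g y ≤ ∫ y in A, f y := by
    rw [← integral_const_mul]
    exact setIntegral_mono_on (hg_int.const_mul a) hf_int hA_meas
      (fun y hy => (hbound y hy).1)
  have hhigh : ∫ y in A, f y ≤ b * ∫ y in A, g y := by
    rw [← integral_const_mul]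
    exact setIntegral_mono_on hf_int (hg_int.const_mul b) hA_meas
      (fun y hy => (hbound y hy).2)
  constructor
  · have hstep : K₁ * ‖x‖ ^ s ≤ ∫ y in A, f y := by
      calc K₁ * ‖x‖ ^ s = a * (C * (‖x‖ ^ s / (2 * s))) := by
            rw [hK₁_def]; ring
        _ ≤ a * ∫ y in A, g y := mul_le_mul_of_nonneg_left hGlow ha.le
        _ ≤ ∫ y in A, f y := hlow
    have hcK : c⁻¹ ≤ K₁ := by
      have h1 : K₁⁻¹ ≤ c := le_trans (le_max_right K₂ K₁⁻¹) (le_max_left _ _)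
      rw [inv_le_comm₀ hc0 hK₁]
      exact h1
    calc c⁻¹ * ‖x‖ ^ s ≤ K₁ * ‖x‖ ^ s := mul_le_mul_of_nonneg_right hcK hxs_pos.le
      _ ≤ ∫ y in A, f y := hstep
  · have hstep : ∫ y in A, f y ≤ K₂ * ‖x‖ ^ s := by
      calc ∫ y in A, f y ≤ b * ∫ y in A, g y := hhigh
        _ ≤ b * (C * (‖x‖ ^ s / s)) := mul_le_mul_of_nonneg_left hGhigh hb.le
        _ = K₂ * ‖x‖ ^ s := by rw [hK₂_def]; ring
    have hcK : K₂ ≤ c := le_trans (le_max_left K₂ K₁⁻¹) (le_max_left _ _)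
    calc ∫ y in A, f y ≤ K₂ * ‖x‖ ^ s := hstep
      _ ≤ c * ‖x‖ ^ s := mul_le_mul_of_nonneg_right hcK hxs_pos.le
end
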